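/- In a connected graph, any two distinct edges lying in the same circuit-connected component can be extended to a cut, i.e., there exists a cut containing both edges. -/

import Mathlib

structure Multigraph (V E : Type*) where
  fst : E → V
  snd : E → V

namespace Multigraph

variable {V E : Type*}

/-- The edge `e` joins vertices `u` and `w` (in either orientation). -/
def Joins (G : Multigraph V E) (e : E) (u w : V) : Prop :=
  (G.fst e = u ∧ G.snd e = w) ∨ (G.fst e = w ∧ G.snd e = u)

/-- Reachability, using only edges in `F`. -/
def Reach (G : Multigraph V E) (F : Set E) : V → V → Prop :=
  Relation.EqvGen (fun u w => ∃ e ∈ F, G.Joins e u w)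

/-- A graph is connected if any two vertices are joined by a walk. -/
def Connected (G : Multigraph V E) : Prop := ∀ u w : V, G.Reach Set.univ u w

/-- A cut of a connected graph: a set `c` of edges such that removing `c`
leaves exactly two connected components (`A` and `Aᶜ`), and every edge of `c`
joins these two components. -/
def IsCut (G : Multigraph V E) (c : Set E) : Prop :=
  ∃ A : Set V, A.Nonempty ∧ Aᶜ.Nonempty ∧
    (∀ u w : V, G.Reach cᶜ u w ↔ ((u ∈ A ∧ w ∈ A) ∨ (u ∈ Aᶜ ∧ w ∈ Aᶜ))) ∧
    (∀ e ∈ c, (G.fst e ∈ A ∧ G.snd e ∈ Aᶜ) ∨ (G.fst e ∈ Aᶜ ∧ G.snd e ∈ A))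

/-- A circuit: a cyclic sequence of pairwise distinct vertices and pairwise
distinct edges, the `i`-th edge joining the `i`-th and `(i+1)`-th vertices.
(Distinctness of the vertices encodes that every vertex is incident to at most
two of the edges of the circuit.) -/
def IsCircuit (G : Multigraph V E) {n : ℕ} (v : ZMod n → V) (ed : ZMod n → E) : Prop :=
  0 < n ∧ Function.Injective v ∧ Function.Injective ed ∧
    ∀ i, G.Joins (ed i) (v i) (v (i + 1))

/-- Two edges are circuit-connected if some circuit contains both. -/
def CircuitConnected (G : Multigraph V E) (e e' : E) : Prop :=
  ∃ (n : ℕ) (v : ZMod n → V) (ed : ZMod n → E),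
    G.IsCircuit v ed ∧ e ∈ Set.range ed ∧ e' ∈ Set.range ed

end Multigraph

private lemma eqvGen_iff_of_invariant {α : Type*} {r : α → α → Prop} {P : α → Prop}
    (h : ∀ a b, r a b → (P a ↔ P b)) :
    ∀ {a b}, Relation.EqvGen r a b → (P a ↔ P b) := by
  intro a b hab
  induction hab with
  | rel a b h' => exact h a b h'
  | refl => exact Iff.rfl
  | symm _ _ _ ih => exact ih.symm
  | trans _ _ _ _ _ ih1 ih2 => exact ih1.trans ih2

private lemma joins_symm {V E : Type*} {G : Multigraph V E} {f : E} {a b : V}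
    (h : G.Joins f a b) : G.Joins f b a := h.symm

/-- In a connected graph, any two distinct circuit-connected edges can be
extended to a cut. -/
theorem stmt_4 {V E : Type*} [Fintype V] [Fintype E]
    (G : Multigraph V E) (hconn : G.Connected)
    (e e' : E) (hne : e ≠ e') (hcc : G.CircuitConnected e e') :
    ∃ c : Set E, G.IsCut c ∧ e ∈ c ∧ e' ∈ c := by
  classical
  obtain ⟨n, v, ed, ⟨hn, hv, hed, hjoin⟩, ⟨i, hei⟩, ⟨j, hej⟩⟩ := hcc
  subst hei; subst hej
  haveI : NeZero n := ⟨hn.ne'⟩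
  have hij : i ≠ j := fun h => hne (by rw [h])
  set d : ℕ := (j - i).val with hdd
  have hd0 : 0 < d := ZMod.val_pos.mpr (sub_ne_zero.mpr (Ne.symm hij))
  have hdn : d < n := ZMod.val_lt _
  have hji : i + (d : ZMod n) = j := by
    rw [hdd, ZMod.natCast_zmod_val]; ring
  -- key injectivity on indices 1..n
  have hkey : ∀ s t : ℕ, 1 ≤ s → s ≤ n → 1 ≤ t → t ≤ n →
      v (i + (s : ZMod n)) = v (i + (t : ZMod n)) → s = t := by
    intro s t hs1 hsn ht1 htn hst
    have h1 : (s : ZMod n) = (t : ZMod n) := add_left_cancel (hv hst)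
    have h2 : s % n = t % n := (ZMod.natCast_eq_natCast_iff' s t n).mp h1
    rcases eq_or_lt_of_le hsn with rfl | hs
    · rcases eq_or_lt_of_le htn with rfl | ht
      · rfl
      · rw [Nat.mod_self, Nat.mod_eq_of_lt ht] at h2; omega
    · rcases eq_or_lt_of_le htn with rfl | ht
      · rw [Nat.mod_self, Nat.mod_eq_of_lt hs] at h2; omega
      · rwa [Nat.mod_eq_of_lt hs, Nat.mod_eq_of_lt ht] at h2
  set P1 : Set V := {x | ∃ t : ℕ, 1 ≤ t ∧ t ≤ d ∧ x = v (i + (t : ZMod n))} with hP1def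
  set P2 : Set V := {x | ∃ t : ℕ, d + 1 ≤ t ∧ t ≤ n ∧ x = v (i + (t : ZMod n))} with hP2def
  -- reachability within a vertex set
  set R : Set V → V → V → Prop :=
    fun S => Relation.EqvGen (fun a b => a ∈ S ∧ b ∈ S ∧ ∃ f, G.Joins f a b) with hRdef
  set b0 : V := v (i + ((1 : ℕ) : ZMod n)) with hb0def
  -- circuit edges as steps
  have hstep : ∀ t : ℕ, ∃ f, G.Joins f (v (i + (t : ZMod n))) (v (i + ((t+1 : ℕ) : ZMod n))) := by
    intro t
    refine ⟨ed (i + (t : ZMod n)), ?_⟩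
    have := hjoin (i + (t : ZMod n))
    have harith : i + (t : ZMod n) + 1 = i + ((t+1 : ℕ) : ZMod n) := by push_cast; ring
    rwa [harith] at this
  set S : Set (Set V) :=
    {X | P1 ⊆ X ∧ (∀ x ∈ X, x ∉ P2) ∧ ∀ x ∈ X, R X b0 x} with hSdef
  -- P1 belongs to S
  have hP1S : P1 ∈ S := by
    refine ⟨subset_rfl, ?_, ?_⟩
    · rintro x ⟨s, hs1, hsd, rfl⟩ ⟨t, ht1, htn, hst⟩
      have := hkey s t hs1 (le_of_lt (lt_of_le_of_lt hsd hdn)) (by omega) htn hst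
      omega
    · rintro x ⟨t, ht1, htd, rfl⟩
      clear hconn
      induction t, ht1 using Nat.le_induction with
      | base => exact Relation.EqvGen.refl _
      | succ t ht ih =>
        have htd' : t ≤ d := by omega
        obtain ⟨f, hf⟩ := hstep t
        refine Relation.EqvGen.trans _ _ _ (ih htd') (Relation.EqvGen.rel _ _ ?_)
        exact ⟨⟨t, ht, htd', rfl⟩, ⟨t+1, by omega, htd, rfl⟩, f, hf⟩
  -- take a maximal element of S
  obtain ⟨X, hXS, hXmax⟩ := Set.Finite.exists_maximalFor id S (Set.toFinite S) ⟨P1, hP1S⟩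
  obtain ⟨hP1X, hXP2, hXconn⟩ := hXS
  -- the cut
  set c : Set E := {f | ¬ (G.fst f ∈ X ↔ G.snd f ∈ X)} with hcdef
  have hc_compl : ∀ f, f ∈ cᶜ ↔ (G.fst f ∈ X ↔ G.snd f ∈ X) := by
    intro f; simp [hcdef]
  -- memberships of key vertices
  have hv1X : b0 ∈ X := hP1X ⟨1, le_refl _, hd0, rfl⟩
  have hviP2 : v i ∈ P2 := by
    refine ⟨n, by omega, le_refl _, ?_⟩
    rw [ZMod.natCast_self, add_zero]
  have hviX : v i ∉ X := fun h => hXP2 _ h hviP2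
  have hvjX : v j ∈ X := by
    rw [← hji]; exact hP1X ⟨d, hd0, le_refl _, rfl⟩
  have hvj1X : v (j + 1) ∉ X := by
    have harith : j + 1 = i + ((d + 1 : ℕ) : ZMod n) := by
      rw [← hji]; push_cast; ring
    rw [harith]
    exact fun h => hXP2 _ h ⟨d + 1, le_refl _, by omega, rfl⟩
  have hv1eq : v (i + 1) = b0 := by rw [hb0def, Nat.cast_one]
  -- both edges are in c
  have heC : ed i ∈ c := by
    have hj := hjoin i
    rw [hv1eq] at hj
    rcases hj with ⟨h1, h2⟩ | ⟨h1, h2⟩ <;> rw [hcdef] <;>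
      simp only [Set.mem_setOf_eq, h1, h2] <;> tauto
  have he'C : ed j ∈ c := by
    have hj := hjoin j
    rcases hj with ⟨h1, h2⟩ | ⟨h1, h2⟩ <;> rw [hcdef] <;>
      simp only [Set.mem_setOf_eq, h1, h2] <;> tauto
  -- conversion from within-set reachability to Reach cᶜ
  have hconv : ∀ (S' : Set V), (∀ x y, x ∈ S' → y ∈ S' → (x ∈ X ↔ y ∈ X)) →
      ∀ a b, R S' a b → G.Reach cᶜ a b := by
    intro S' hS' a b hab
    refine Relation.EqvGen.mono ?_ _ _ hab
    rintro x y ⟨hx, hy, f, hf⟩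
    refine ⟨f, ?_, hf⟩
    rw [hc_compl]
    rcases hf with ⟨h1, h2⟩ | ⟨h1, h2⟩ <;> rw [h1, h2]
    · exact hS' x y hx hy
    · exact hS' y x hy hx
  have hconvX : ∀ a b, R X a b → G.Reach cᶜ a b :=
    hconv X (fun x y hx hy => by simp [hx, hy])
  have hconvXc : ∀ a b, R Xᶜ a b → G.Reach cᶜ a b :=
    hconv Xᶜ (fun x y hx hy => iff_of_false hx hy)
  -- forward: Reach cᶜ preserves sides
  have hforward : ∀ u w, G.Reach cᶜ u w → (u ∈ X ↔ w ∈ X) := by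
    intro u w huw
    refine eqvGen_iff_of_invariant ?_ huw
    rintro a b ⟨f, hf, hj⟩
    rw [hc_compl] at hf
    rcases hj with ⟨h1, h2⟩ | ⟨h1, h2⟩
    · rw [← h1, ← h2]; exact hf
    · rw [← h1, ← h2]; exact hf.symm
  -- P2-path connectivity within Xᶜ
  have hP2X : ∀ x ∈ P2, x ∈ Xᶜ := fun x hx => fun h => hXP2 x h hx
  have hP2conn : ∀ t : ℕ, d + 1 ≤ t → t ≤ n →
      R Xᶜ (v (i + ((d + 1 : ℕ) : ZMod n))) (v (i + (t : ZMod n))) := by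
    intro t ht1 htn
    clear hconn
    induction t, ht1 using Nat.le_induction with
    | base => exact Relation.EqvGen.refl _
    | succ t ht ih =>
      have htn' : t ≤ n := by omega
      obtain ⟨f, hf⟩ := hstep t
      refine Relation.EqvGen.trans _ _ _ (ih htn') (Relation.EqvGen.rel _ _ ?_)
      exact ⟨hP2X _ ⟨t, ht, htn', rfl⟩, hP2X _ ⟨t+1, by omega, htn, rfl⟩, f, hf⟩
  have hvieq : v i = v (i + ((n : ℕ) : ZMod n)) := by rw [ZMod.natCast_self, add_zero]
  have hP2vi : R Xᶜ (v (i + ((d + 1 : ℕ) : ZMod n))) (v i) := by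
    rw [hvieq]; exact hP2conn n (by omega) (le_refl _)
  -- main lemma: every vertex outside X reaches v i within Xᶜ
  have hY : ∀ y, y ∉ X → R Xᶜ y (v i) := by
    intro y hy
    set Z : Set V := {z | z ∉ X ∧ R Xᶜ y z} with hZdef
    have hyZ : y ∈ Z := ⟨hy, Relation.EqvGen.refl _⟩
    by_cases hcase : ∃ t : ℕ, d + 1 ≤ t ∧ t ≤ n ∧ v (i + (t : ZMod n)) ∈ Z
    · obtain ⟨t, ht1, htn, _, hreach⟩ := hcase
      exact Relation.EqvGen.trans _ _ _ hreach
        (Relation.EqvGen.trans _ _ _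
          (Relation.EqvGen.symm _ _ (hP2conn t ht1 htn)) hP2vi)
    · exfalso
      -- Z avoids P2
      have hZ2 : ∀ z ∈ Z, z ∉ P2 := by
        rintro z hz ⟨t, ht1, htn, rfl⟩
        exact hcase ⟨t, ht1, htn, hz⟩
      -- Z is closed under edges inside Xᶜ
      have hZclosed : ∀ a b, a ∈ Z → b ∉ X → (∃ f, G.Joins f a b) → b ∈ Z := by
        rintro a b ⟨haX, har⟩ hb hf
        exact ⟨hb, Relation.EqvGen.trans _ _ _ har
          (Relation.EqvGen.rel _ _ ⟨haX, hb, hf⟩)⟩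
      -- there is an edge linking Z to X
      have hL : ∃ z x f, z ∈ Z ∧ x ∈ X ∧ G.Joins f z x := by
        set L : Prop := ∃ z x f, z ∈ Z ∧ x ∈ X ∧ G.Joins f z x with hLdef
        have key : ∀ a b, (∃ f ∈ (Set.univ : Set E), G.Joins f a b) →
            ((a ∈ Z ∨ L) ↔ (b ∈ Z ∨ L)) := by
          rintro a b ⟨f, -, hf⟩
          constructor
          · rintro (ha | hl)
            · by_cases hb : b ∈ X
              · exact Or.inr ⟨a, b, f, ha, hb, hf⟩
              · exact Or.inl (hZclosed a b ha hb ⟨f, hf⟩)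
            · exact Or.inr hl
          · rintro (hb | hl)
            · by_cases ha : a ∈ X
              · exact Or.inr ⟨b, a, f, hb, ha, joins_symm hf⟩
              · exact Or.inl (hZclosed b a hb ha ⟨f, joins_symm hf⟩)
            · exact Or.inr hl
        have := (eqvGen_iff_of_invariant key (hconn y b0)).mp (Or.inl hyZ)
        rcases this with hb0Z | hl
        · exact absurd hv1X hb0Z.1
        · exact hl
      obtain ⟨z0, x0, f0, hz0, hx0, hf0⟩ := hL
      -- every element of Z is reachable from y within Z
      have hZsub : ∀ a b, (a ∈ Z ∧ b ∈ Z ∧ ∃ f, G.Joins f a b) →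
          (a ∈ Xᶜ ∧ b ∈ Xᶜ ∧ ∃ f, G.Joins f a b) :=
        fun a b ⟨ha, hb, hf⟩ => ⟨ha.1, hb.1, hf⟩
      have hZchain : ∀ z ∈ Z, R Z y z := by
        have key : ∀ a b, (a ∈ Xᶜ ∧ b ∈ Xᶜ ∧ ∃ f, G.Joins f a b) →
            (R Z y a ↔ R Z y b) := by
          rintro a b ⟨haX, hbX, f, hf⟩
          constructor
          · intro hra
            have haZ : a ∈ Z := ⟨haX, Relation.EqvGen.mono hZsub _ _ hra⟩
            have hbZ : b ∈ Z := hZclosed a b haZ hbX ⟨f, hf⟩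
            exact Relation.EqvGen.trans _ _ _ hra
              (Relation.EqvGen.rel _ _ ⟨haZ, hbZ, f, hf⟩)
          · intro hrb
            have hbZ : b ∈ Z := ⟨hbX, Relation.EqvGen.mono hZsub _ _ hrb⟩
            have haZ : a ∈ Z := hZclosed b a hbZ haX ⟨f, joins_symm hf⟩
            exact Relation.EqvGen.trans _ _ _ hrb
              (Relation.EqvGen.rel _ _ ⟨hbZ, haZ, f, joins_symm hf⟩)
        rintro z ⟨hzX, hzr⟩
        exact (eqvGen_iff_of_invariant key hzr).mp (Relation.EqvGen.refl _)
      -- X ∪ Z is in S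
      have hXZmono : ∀ a b, (a ∈ X ∧ b ∈ X ∧ ∃ f, G.Joins f a b) →
          (a ∈ X ∪ Z ∧ b ∈ X ∪ Z ∧ ∃ f, G.Joins f a b) :=
        fun a b ⟨ha, hb, hf⟩ => ⟨Or.inl ha, Or.inl hb, hf⟩
      have hZXZmono : ∀ a b, (a ∈ Z ∧ b ∈ Z ∧ ∃ f, G.Joins f a b) →
          (a ∈ X ∪ Z ∧ b ∈ X ∪ Z ∧ ∃ f, G.Joins f a b) :=
        fun a b ⟨ha, hb, hf⟩ => ⟨Or.inr ha, Or.inr hb, hf⟩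
      have hXZS : X ∪ Z ∈ S := by
        refine ⟨fun x hx => Or.inl (hP1X hx), ?_, ?_⟩
        · rintro x (hx | hx)
          · exact hXP2 x hx
          · exact hZ2 x hx
        · rintro x (hx | hx)
          · exact Relation.EqvGen.mono hXZmono _ _ (hXconn x hx)
          · have h1 : R (X ∪ Z) b0 x0 := Relation.EqvGen.mono hXZmono _ _ (hXconn x0 hx0)
            have h2 : R (X ∪ Z) x0 z0 :=
              Relation.EqvGen.rel _ _ ⟨Or.inl hx0, Or.inr hz0, f0, joins_symm hf0⟩
            have h3 : R Z z0 x :=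
              Relation.EqvGen.trans _ _ _
                (Relation.EqvGen.symm _ _ (hZchain z0 hz0)) (hZchain x hx)
            exact Relation.EqvGen.trans _ _ _ (Relation.EqvGen.trans _ _ _ h1 h2)
              (Relation.EqvGen.mono hZXZmono _ _ h3)
      have heq : X = X ∪ Z := Set.Subset.antisymm Set.subset_union_left (hXmax hXZS Set.subset_union_left)
      have : y ∈ X := by rw [heq]; exact Or.inr hyZ
      exact hy this
  -- assemble the cut
  refine ⟨c, ⟨X, ⟨b0, hv1X⟩, ⟨v i, hviX⟩, ?_, ?_⟩, heC, he'C⟩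
  · intro u w
    constructor
    · intro h
      have := hforward u w h
      by_cases hu : u ∈ X
      · exact Or.inl ⟨hu, this.mp hu⟩
      · exact Or.inr ⟨hu, fun hw => hu (this.mpr hw)⟩
    · rintro (⟨hu, hw⟩ | ⟨hu, hw⟩)
      · exact Relation.EqvGen.trans _ _ _
          (Relation.EqvGen.symm _ _ (hconvX _ _ (hXconn u hu)))
          (hconvX _ _ (hXconn w hw))
      · exact hconvXc _ _ (Relation.EqvGen.trans _ _ _ (hY u hu)
          (Relation.EqvGen.symm _ _ (hY w hw)))
  · intro f hf
    rw [hcdef] at hf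
    simp only [Set.mem_setOf_eq] at hf
    by_cases h1 : G.fst f ∈ X
    · exact Or.inl ⟨h1, fun h2 => hf ⟨fun _ => h2, fun _ => h1⟩⟩
    · refine Or.inr ⟨h1, ?_⟩
      by_contra h2
      exact hf ⟨fun h => absurd h h1, fun h => absurd h h2⟩
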